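/- For the function H defined by H = G_t − μ G_x + (1/2) G_{xx} with G(t, x) = x² + 2∫_x^∞ z(1 − F^μ(T−t, z)) dz, one has the closed-form expression H(t, x) = (2μ²(T−t) − 2μx + 3)Φ((x − μ(T−t))/√(T−t)) − 2μ√(T−t)φ((x − μ(T−t))/√(T−t)) − e^{2μx}Φ((−x − μ(T−t))/√(T−t)) − 2(1 + μ²(T−t)) for 0 ≤ t < T and x ≥ 0. -/

import Mathlib

open Set MeasureTheory

/-- Standard normal CDF. -/
noncomputable def stdNormalCDF (x : ℝ) : ℝ :=
  ∫ t in Iic x, (Real.sqrt (2 * Real.pi))⁻¹ * Real.exp (-(t ^ 2) / 2)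

/-- The CDF of the maximum of Brownian motion with drift `μ` over `[0, s]`. -/
noncomputable def Fmu (μ s z : ℝ) : ℝ :=
  stdNormalCDF ((z - μ * s) / Real.sqrt s)
    - Real.exp (2 * μ * z) * stdNormalCDF ((-z - μ * s) / Real.sqrt s)

/-- The gain function `G(t, x) = x² + 2∫_x^∞ z (1 - F^μ(T - t, z)) dz`. -/
noncomputable def Gfun (μ T t x : ℝ) : ℝ :=
  x ^ 2 + 2 * ∫ z in Ioi x, z * (1 - Fmu μ (T - t) z)

/-- Standard normal density. -/
noncomputable def stdNormalPDF (x : ℝ) : ℝ :=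
  (Real.sqrt (2 * Real.pi))⁻¹ * Real.exp (-(x ^ 2) / 2)

open Filter Topology

lemma sqrt_two_pi_pos : 0 < Real.sqrt (2 * Real.pi) := Real.sqrt_pos.2 (by positivity)

lemma pdf_def : stdNormalPDF = fun x => (Real.sqrt (2 * Real.pi))⁻¹ * Real.exp (-(1/2) * x ^ 2) := by
  funext x; rw [stdNormalPDF]; ring_nf

lemma pdf_pos (x : ℝ) : 0 < stdNormalPDF x := by rw [stdNormalPDF]; positivity

lemma continuous_pdf : Continuous stdNormalPDF := by
  unfold stdNormalPDF; fun_prop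

lemma integrable_pdf : Integrable stdNormalPDF := by
  rw [pdf_def]
  exact (integrable_exp_neg_mul_sq (by norm_num : (0:ℝ) < 1/2)).const_mul _

lemma integral_pdf : ∫ x, stdNormalPDF x = 1 := by
  rw [pdf_def]
  rw [MeasureTheory.integral_const_mul, integral_gaussian]
  rw [show Real.pi / (1/2) = 2 * Real.pi by ring]
  exact inv_mul_cancel₀ (ne_of_gt sqrt_two_pi_pos)

lemma cdf_eq (x : ℝ) : stdNormalCDF x = ∫ t in Iic x, stdNormalPDF t := rfl

lemma hasDerivAt_cdf (y : ℝ) : HasDerivAt stdNormalCDF (stdNormalPDF y) y := by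
  have key : ∀ x : ℝ, stdNormalCDF x = stdNormalCDF 0 + ∫ t in (0:ℝ)..x, stdNormalPDF t := by
    intro x
    rw [cdf_eq, cdf_eq, ← intervalIntegral.integral_Iic_sub_Iic
      integrable_pdf.integrableOn integrable_pdf.integrableOn]
    ring
  have h : HasDerivAt (fun x => stdNormalCDF 0 + ∫ t in (0:ℝ)..x, stdNormalPDF t)
      (stdNormalPDF y) y := by
    exact (intervalIntegral.integral_hasDerivAt_right
      (continuous_pdf.intervalIntegrable _ _)
      (continuous_pdf.stronglyMeasurableAtFilter _ _)
      continuous_pdf.continuousAt).const_add _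
  exact h.congr_of_eventuallyEq (Filter.Eventually.of_forall fun x => (key x))

lemma continuous_cdf : Continuous stdNormalCDF :=
  continuous_iff_continuousAt.2 fun y => (hasDerivAt_cdf y).continuousAt

lemma tendsto_cdf_atTop : Tendsto stdNormalCDF atTop (𝓝 1) := by
  have h := tendsto_setIntegral_of_monotone (fun y : ℝ => measurableSet_Iic)
    (fun a b hab => Iic_subset_Iic.2 hab) (f := stdNormalPDF) (μ := volume) ?_
  · rw [iUnion_Iic] at h
    rw [setIntegral_univ, integral_pdf] at h; exact h
  · rw [iUnion_Iic]
    exact integrable_pdf.integrableOn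

lemma pdf_even (x : ℝ) : stdNormalPDF (-x) = stdNormalPDF x := by
  simp [stdNormalPDF]

lemma cdf_neg (y : ℝ) : stdNormalCDF (-y) = 1 - stdNormalCDF y := by
  have h1 : stdNormalCDF (-y) = ∫ t in Ioi y, stdNormalPDF t := by
    rw [cdf_eq]
    calc ∫ t in Iic (-y), stdNormalPDF t = ∫ t in Iic (-y), stdNormalPDF (-t) :=
          (setIntegral_congr_fun measurableSet_Iic fun t _ => (pdf_even t).symm)
      _ = ∫ t in Ioi (-(-y)), stdNormalPDF t := integral_comp_neg_Iic _ _
      _ = ∫ t in Ioi y, stdNormalPDF t := by rw [neg_neg]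
  have h2 : stdNormalCDF y + ∫ t in Ioi y, stdNormalPDF t = 1 := by
    rw [cdf_eq, ← integral_pdf]
    exact intervalIntegral.integral_Iic_add_Ioi integrable_pdf.integrableOn integrable_pdf.integrableOn
  linarith

lemma tendsto_pdf_atTop : Tendsto stdNormalPDF atTop (𝓝 0) := by
  rw [pdf_def]
  have h : Tendsto (fun x : ℝ => Real.exp (-(1/2) * x ^ 2)) atTop (𝓝 0) := by
    apply Real.tendsto_exp_atBot.comp
    apply Filter.Tendsto.const_mul_atTop_of_neg (by norm_num : -(1/2 : ℝ) < 0)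
    exact tendsto_pow_atTop two_ne_zero
  simpa using h.const_mul ((Real.sqrt (2 * Real.pi))⁻¹)

lemma tendsto_id_mul_pdf_atTop : Tendsto (fun t : ℝ => t * stdNormalPDF t) atTop (𝓝 0) := by
  have h := (rpow_mul_exp_neg_mul_sq_isLittleO_exp_neg (by norm_num : (0:ℝ) < 1/2) 1)
  have h2 : Tendsto (fun x : ℝ => Real.exp (-(1/2) * x)) atTop (𝓝 0) := by
    apply Real.tendsto_exp_atBot.comp
    exact Filter.Tendsto.const_mul_atTop_of_neg (by norm_num : -(1/2 : ℝ) < 0) tendsto_id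
  have h3 : Tendsto (fun x : ℝ => x ^ (1:ℝ) * Real.exp (-(1/2) * x ^ 2)) atTop (𝓝 0) :=
    h.tendsto_zero_of_tendsto h2
  have h4 : Tendsto (fun x : ℝ => x * Real.exp (-(1/2) * x ^ 2)) atTop (𝓝 0) := by
    apply h3.congr'
    filter_upwards [eventually_gt_atTop (0:ℝ)] with x hx
    rw [Real.rpow_one]
  have := h4.const_mul ((Real.sqrt (2 * Real.pi))⁻¹)
  rw [mul_zero] at this
  apply this.congr
  intro x
  rw [_root_.pdf_def]; ring

lemma integral_id_mul_pdf_Ioi (y : ℝ) (hy : 0 ≤ y) :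
    ∫ t in Ioi y, t * stdNormalPDF t = stdNormalPDF y := by
  have hderiv : ∀ t ∈ Ici y, HasDerivAt (fun t => -stdNormalPDF t) (t * stdNormalPDF t) t := by
    intro t _
    rw [pdf_def]
    have h : HasDerivAt (fun t : ℝ => -(1/2) * t ^ 2) (-(1/2) * (2 * t)) t :=
      ((hasDerivAt_pow 2 t).const_mul _).congr_deriv (by ring)
    have := ((h.exp).const_mul ((Real.sqrt (2 * Real.pi))⁻¹)).neg
    apply this.congr_deriv
    ring
  have hpos : ∀ t ∈ Ioi y, 0 ≤ t * stdNormalPDF t := fun t ht =>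
    mul_nonneg (le_trans hy (le_of_lt ht)) (pdf_pos t).le
  have htend : Tendsto (fun t => -stdNormalPDF t) atTop (𝓝 0) := by
    simpa using tendsto_pdf_atTop.neg
  have h := integral_Ioi_of_hasDerivAt_of_nonneg' hderiv hpos htend
  rw [h]; ring

lemma integrableOn_id_mul_pdf_Ioi (y : ℝ) (hy : 0 ≤ y) :
    IntegrableOn (fun t => t * stdNormalPDF t) (Ioi y) := by
  have hderiv : ∀ t ∈ Ici y, HasDerivAt (fun t => -stdNormalPDF t) (t * stdNormalPDF t) t := by
    intro t _
    rw [pdf_def]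
    have h : HasDerivAt (fun t : ℝ => -(1/2) * t ^ 2) (-(1/2) * (2 * t)) t :=
      ((hasDerivAt_pow 2 t).const_mul _).congr_deriv (by ring)
    have := ((h.exp).const_mul ((Real.sqrt (2 * Real.pi))⁻¹)).neg
    apply this.congr_deriv
    ring
  have hpos : ∀ t ∈ Ioi y, 0 ≤ t * stdNormalPDF t := fun t ht =>
    mul_nonneg (le_trans hy (le_of_lt ht)) (pdf_pos t).le
  have htend : Tendsto (fun t => -stdNormalPDF t) atTop (𝓝 0) := by
    simpa using tendsto_pdf_atTop.neg
  exact integrableOn_Ioi_deriv_of_nonneg' hderiv hpos htend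

lemma cdf_tail {y : ℝ} (hy : 0 < y) : stdNormalCDF (-y) ≤ stdNormalPDF y / y := by
  have h1 : stdNormalCDF (-y) = ∫ t in Ioi y, stdNormalPDF t := by
    have := cdf_neg y
    have h2 : stdNormalCDF y + ∫ t in Ioi y, stdNormalPDF t = 1 := by
      rw [cdf_eq, ← integral_pdf]
      exact intervalIntegral.integral_Iic_add_Ioi integrable_pdf.integrableOn
        integrable_pdf.integrableOn
    linarith
  rw [h1]
  have hle : ∫ t in Ioi y, stdNormalPDF t ≤ ∫ t in Ioi y, (t / y) * stdNormalPDF t := by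
    apply setIntegral_mono_on integrable_pdf.integrableOn
    · have := (integrableOn_id_mul_pdf_Ioi y hy.le).const_mul (1/y)
      apply this.congr (Filter.Eventually.of_forall fun t => by ring)
    · exact measurableSet_Ioi
    · intro t ht
      have h3 : 1 ≤ t / y := (one_le_div hy).2 (le_of_lt ht)
      nlinarith [pdf_pos t, pdf_pos t]
  have heq : ∫ t in Ioi y, (t / y) * stdNormalPDF t = stdNormalPDF y / y := by
    have : ∀ t : ℝ, (t / y) * stdNormalPDF t = (1/y) * (t * stdNormalPDF t) := fun t => by ring
    simp_rw [this]
    rw [MeasureTheory.integral_const_mul, integral_id_mul_pdf_Ioi y hy.le]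
    ring
  linarith

lemma cdf_nonneg (x : ℝ) : 0 ≤ stdNormalCDF x := by
  rw [cdf_eq]
  exact setIntegral_nonneg measurableSet_Iic fun t _ => (pdf_pos t).le

lemma cdf_le_one (x : ℝ) : stdNormalCDF x ≤ 1 := by
  have h := cdf_neg x
  have := cdf_nonneg (-x)
  linarith

lemma hasDerivAt_pdf (t : ℝ) : HasDerivAt stdNormalPDF (-t * stdNormalPDF t) t := by
  rw [pdf_def]
  have h : HasDerivAt (fun t : ℝ => -(1/2) * t ^ 2) (-(1/2) * (2 * t)) t :=
    ((hasDerivAt_pow 2 t).const_mul _).congr_deriv (by ring)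
  have := h.exp.const_mul ((Real.sqrt (2 * Real.pi))⁻¹)
  apply this.congr_deriv
  ring

lemma exp_mul_pdf {s : ℝ} (hs : 0 < s) (μ z : ℝ) :
    Real.exp (2 * μ * z) * stdNormalPDF ((-z - μ * s) / Real.sqrt s)
      = stdNormalPDF ((z - μ * s) / Real.sqrt s) := by
  have h : Real.sqrt s ^ 2 = s := Real.sq_sqrt hs.le
  have hne : Real.sqrt s ≠ 0 := by positivity
  rw [stdNormalPDF, stdNormalPDF, mul_left_comm, ← Real.exp_add]
  congr 2
  field_simp
  nlinarith [h]

lemma one_sub_Fmu (μ s z : ℝ) :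
    1 - Fmu μ s z = stdNormalCDF (-((z - μ * s) / Real.sqrt s))
      + Real.exp (2 * μ * z) * stdNormalCDF ((-z - μ * s) / Real.sqrt s) := by
  rw [Fmu, cdf_neg]; ring

lemma Fmu_le_one (μ s z : ℝ) : Fmu μ s z ≤ 1 := by
  rw [Fmu]
  have h1 := cdf_le_one ((z - μ * s) / Real.sqrt s)
  have h2 := cdf_nonneg ((-z - μ * s) / Real.sqrt s)
  nlinarith [Real.exp_pos (2 * μ * z)]

lemma continuous_Fmu_z (μ s : ℝ) : Continuous (fun z => Fmu μ s z) := by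
  unfold Fmu
  exact (continuous_cdf.comp ((continuous_id.sub continuous_const).div_const _)).sub
    (((continuous_const.mul continuous_id).rexp).mul
      (continuous_cdf.comp ((continuous_id.neg.sub continuous_const).div_const _)))

lemma tendsto_affine_atTop {c h : ℝ} (hh : 0 < h) :
    Tendsto (fun z : ℝ => (z - c) / h) atTop atTop := by
  apply Tendsto.atTop_div_const hh
  simpa [sub_eq_add_neg] using tendsto_atTop_add_const_right atTop (-c) tendsto_id

lemma integrableOn_id_mul_pdf_comp {c h : ℝ} (hh : 0 < h) {B : ℝ} (hB : 0 ≤ B) :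
    IntegrableOn (fun z => z * stdNormalPDF ((z - c) / h)) (Ioi B) := by
  have hne : h ≠ 0 := ne_of_gt hh
  have hderiv : ∀ z ∈ Ici B, HasDerivAt
      (fun z => -(h^2) * stdNormalPDF ((z - c) / h) + c * h * stdNormalCDF ((z - c) / h))
      (z * stdNormalPDF ((z - c) / h)) z := by
    intro z _
    have hin : HasDerivAt (fun z : ℝ => (z - c) / h) (1 / h) z := by
      simpa using ((hasDerivAt_id z).sub_const c).div_const h
    have h1 := ((hasDerivAt_pdf ((z - c) / h)).comp z hin).const_mul (-(h^2))
    have h2 := ((hasDerivAt_cdf ((z - c) / h)).comp z hin).const_mul (c * h)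
    apply (h1.add h2).congr_deriv
    field_simp
    ring
  have hpos : ∀ z ∈ Ioi B, 0 ≤ z * stdNormalPDF ((z - c) / h) := fun z hz =>
    mul_nonneg (le_trans hB (le_of_lt hz)) (pdf_pos _).le
  have htend : Tendsto
      (fun z => -(h^2) * stdNormalPDF ((z - c) / h) + c * h * stdNormalCDF ((z - c) / h))
      atTop (𝓝 (c * h)) := by
    have t1 := (tendsto_pdf_atTop.comp (tendsto_affine_atTop hh (c := c))).const_mul (-(h^2))
    have t2 := (tendsto_cdf_atTop.comp (tendsto_affine_atTop hh (c := c))).const_mul (c * h)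
    have := t1.add t2
    simpa using this
  exact integrableOn_Ioi_deriv_of_nonneg' hderiv hpos htend

lemma one_sub_Fmu_nonneg (μ s z : ℝ) : 0 ≤ 1 - Fmu μ s z := by
  have := Fmu_le_one μ s z; linarith

lemma one_sub_Fmu_le {μ s : ℝ} (hs : 0 < s) {z : ℝ} (hz : |μ| * s + Real.sqrt s ≤ z) :
    1 - Fmu μ s z ≤ 2 * stdNormalPDF ((z - μ * s) / Real.sqrt s) := by
  have hsq : 0 < Real.sqrt s := Real.sqrt_pos.2 hs
  have hu : 1 ≤ (z - μ * s) / Real.sqrt s := by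
    rw [le_div_iff₀ hsq]
    have : μ * s ≤ |μ| * s := mul_le_mul_of_nonneg_right (le_abs_self μ) hs.le
    linarith
  have hv : 1 ≤ (z + μ * s) / Real.sqrt s := by
    rw [le_div_iff₀ hsq]
    have : -(μ * s) ≤ |μ| * s := by
      have := neg_abs_le μ
      nlinarith
    linarith
  have hu0 : 0 < (z - μ * s) / Real.sqrt s := lt_of_lt_of_le one_pos hu
  have hv0 : 0 < (z + μ * s) / Real.sqrt s := lt_of_lt_of_le one_pos hv
  rw [one_sub_Fmu]
  have t1 : stdNormalCDF (-((z - μ * s) / Real.sqrt s))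
      ≤ stdNormalPDF ((z - μ * s) / Real.sqrt s) := by
    calc stdNormalCDF (-((z - μ * s) / Real.sqrt s))
        ≤ stdNormalPDF ((z - μ * s) / Real.sqrt s) / ((z - μ * s) / Real.sqrt s) :=
          cdf_tail hu0
      _ ≤ stdNormalPDF ((z - μ * s) / Real.sqrt s) := by
          rw [div_le_iff₀ hu0]
          nlinarith [pdf_pos ((z - μ * s) / Real.sqrt s)]
  have t2 : Real.exp (2 * μ * z) * stdNormalCDF ((-z - μ * s) / Real.sqrt s)
      ≤ stdNormalPDF ((z - μ * s) / Real.sqrt s) := by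
    have he : (-z - μ * s) / Real.sqrt s = -((z + μ * s) / Real.sqrt s) := by ring
    have tail := cdf_tail hv0
    rw [← he] at tail
    calc Real.exp (2 * μ * z) * stdNormalCDF ((-z - μ * s) / Real.sqrt s)
        ≤ Real.exp (2 * μ * z) *
            (stdNormalPDF ((z + μ * s) / Real.sqrt s) / ((z + μ * s) / Real.sqrt s)) :=
          mul_le_mul_of_nonneg_left tail (Real.exp_pos _).le
      _ ≤ Real.exp (2 * μ * z) * stdNormalPDF ((z + μ * s) / Real.sqrt s) := by
          apply mul_le_mul_of_nonneg_left _ (Real.exp_pos _).le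
          rw [div_le_iff₀ hv0]
          nlinarith [pdf_pos ((z + μ * s) / Real.sqrt s)]
      _ = stdNormalPDF ((z - μ * s) / Real.sqrt s) := by
          rw [show (z + μ * s) / Real.sqrt s = -((-z - μ * s) / Real.sqrt s) by ring,
            pdf_even]
          exact exp_mul_pdf hs μ z
  linarith

lemma integrableOn_g {μ s : ℝ} (hs : 0 < s) (b : ℝ) :
    IntegrableOn (fun z => z * (1 - Fmu μ s z)) (Ioi b) := by
  set B := max b (max 0 (|μ| * s + Real.sqrt s)) with hB
  have hbB : b ≤ B := le_max_left _ _
  have hB0 : 0 ≤ B := le_trans (le_max_left _ _) (le_max_right _ _)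
  have hBmu : |μ| * s + Real.sqrt s ≤ B := le_trans (le_max_right _ _) (le_max_right _ _)
  have hcont : Continuous (fun z => z * (1 - Fmu μ s z)) :=
    continuous_id.mul (continuous_const.sub (continuous_Fmu_z μ s))
  rw [← Ioc_union_Ioi_eq_Ioi hbB]
  apply IntegrableOn.union
  · exact hcont.integrableOn_Ioc
  · have hint := (integrableOn_id_mul_pdf_comp (c := μ * s) (Real.sqrt_pos.2 hs) hB0).const_mul 2
    apply Integrable.mono' hint hcont.aestronglyMeasurable
    filter_upwards [ae_restrict_mem measurableSet_Ioi] with z hz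
    have hz' : |μ| * s + Real.sqrt s ≤ z := le_trans hBmu (le_of_lt hz)
    have h0 : 0 ≤ z * (1 - Fmu μ s z) :=
      mul_nonneg (le_trans hB0 (le_of_lt hz)) (one_sub_Fmu_nonneg μ s z)
    rw [Real.norm_eq_abs, abs_of_nonneg h0]
    have := one_sub_Fmu_le hs hz'
    have hz0 : 0 ≤ z := le_trans hB0 (le_of_lt hz)
    nlinarith

lemma hasDerivAt_Fmu_z {s : ℝ} (hs : 0 < s) (μ z : ℝ) :
    HasDerivAt (fun z => Fmu μ s z)
      (2 * stdNormalPDF ((z - μ * s) / Real.sqrt s) / Real.sqrt s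
        - 2 * μ * Real.exp (2 * μ * z) * stdNormalCDF ((-z - μ * s) / Real.sqrt s)) z := by
  have hsq : 0 < Real.sqrt s := Real.sqrt_pos.2 hs
  have hne : Real.sqrt s ≠ 0 := ne_of_gt hsq
  have inner1 : HasDerivAt (fun z : ℝ => (z - μ * s) / Real.sqrt s) (1 / Real.sqrt s) z := by
    simpa using ((hasDerivAt_id z).sub_const (μ * s)).div_const (Real.sqrt s)
  have inner2 : HasDerivAt (fun z : ℝ => (-z - μ * s) / Real.sqrt s) (-1 / Real.sqrt s) z := by
    simpa using (((hasDerivAt_id z).neg).sub_const (μ * s)).div_const (Real.sqrt s)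
  have h1 := (hasDerivAt_cdf ((z - μ * s) / Real.sqrt s)).comp z inner1
  have h2 := (hasDerivAt_cdf ((-z - μ * s) / Real.sqrt s)).comp z inner2
  have hexp : HasDerivAt (fun z : ℝ => Real.exp (2 * μ * z))
      (2 * μ * Real.exp (2 * μ * z)) z := by
    have hlin : HasDerivAt (fun z : ℝ => 2 * μ * z) (2 * μ) z := by
      simpa using (hasDerivAt_id z).const_mul (2 * μ)
    simpa [mul_comm] using hlin.exp
  have total := h1.sub (hexp.mul h2)
  apply total.congr_deriv
  rw [← exp_mul_pdf hs μ z]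
  field_simp
  simp only [Function.comp_apply]
  ring

lemma hasDerivAt_g_z {s : ℝ} (hs : 0 < s) (μ z : ℝ) :
    HasDerivAt (fun z => z * (1 - Fmu μ s z))
      ((1 - Fmu μ s z) - z * (2 * stdNormalPDF ((z - μ * s) / Real.sqrt s) / Real.sqrt s
        - 2 * μ * Real.exp (2 * μ * z) * stdNormalCDF ((-z - μ * s) / Real.sqrt s))) z := by
  have h := (hasDerivAt_id z).mul ((hasDerivAt_Fmu_z hs μ z).const_sub 1)
  apply h.congr_deriv
  simp only [id_eq]
  ring

lemma hasDerivAt_Fmu_s {s : ℝ} (hs : 0 < s) (μ z : ℝ) :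
    HasDerivAt (fun s => Fmu μ s z)
      (-(z * stdNormalPDF ((z - μ * s) / Real.sqrt s)) / (s * Real.sqrt s)) s := by
  have hsq : 0 < Real.sqrt s := Real.sqrt_pos.2 hs
  have hne : Real.sqrt s ≠ 0 := ne_of_gt hsq
  have hss : Real.sqrt s * Real.sqrt s = s := Real.mul_self_sqrt hs.le
  have hsqrt : HasDerivAt Real.sqrt (1 / (2 * Real.sqrt s)) s := Real.hasDerivAt_sqrt (ne_of_gt hs)
  have f1 : HasDerivAt (fun s : ℝ => z - μ * s) (-μ) s := by
    simpa using ((hasDerivAt_id s).const_mul μ).const_sub z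
  have f2 : HasDerivAt (fun s : ℝ => -z - μ * s) (-μ) s := by
    simpa using ((hasDerivAt_id s).const_mul μ).const_sub (-z)
  have q1 := f1.div hsqrt hne
  have q2 := f2.div hsqrt hne
  have h1 := (hasDerivAt_cdf ((z - μ * s) / Real.sqrt s)).comp s q1
  have h2 := ((hasDerivAt_cdf ((-z - μ * s) / Real.sqrt s)).comp s q2).const_mul
    (Real.exp (2 * μ * z))
  have total := h1.sub h2
  apply total.congr_deriv
  rw [← exp_mul_pdf hs μ z]
  field_simp
  ring_nf
  rw [Real.sq_sqrt hs.le]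
  ring

lemma integral_sq_pdf_Ioi {μ s : ℝ} (hs : 0 < s) (x : ℝ) :
    ∫ z in Ioi x, z ^ 2 * stdNormalPDF ((z - μ * s) / Real.sqrt s) / (s * Real.sqrt s)
      = (μ ^ 2 * s + 1) * (1 - stdNormalCDF ((x - μ * s) / Real.sqrt s))
        + (2 * μ * Real.sqrt s + (x - μ * s) / Real.sqrt s)
          * stdNormalPDF ((x - μ * s) / Real.sqrt s) := by
  have hsq : 0 < Real.sqrt s := Real.sqrt_pos.2 hs
  have hne : Real.sqrt s ≠ 0 := ne_of_gt hsq
  have hss : Real.sqrt s * Real.sqrt s = s := Real.mul_self_sqrt hs.le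
  set A := fun z => (μ ^ 2 * s + 1) * stdNormalCDF ((z - μ * s) / Real.sqrt s)
    - 2 * μ * Real.sqrt s * stdNormalPDF ((z - μ * s) / Real.sqrt s)
    - ((z - μ * s) / Real.sqrt s) * stdNormalPDF ((z - μ * s) / Real.sqrt s) with hA
  have hderiv : ∀ z ∈ Ici x, HasDerivAt A
      (z ^ 2 * stdNormalPDF ((z - μ * s) / Real.sqrt s) / (s * Real.sqrt s)) z := by
    intro z _
    have inner1 : HasDerivAt (fun z : ℝ => (z - μ * s) / Real.sqrt s) (1 / Real.sqrt s) z := by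
      simpa using ((hasDerivAt_id z).sub_const (μ * s)).div_const (Real.sqrt s)
    have h1 := ((hasDerivAt_cdf ((z - μ * s) / Real.sqrt s)).comp z inner1).const_mul
      (μ ^ 2 * s + 1)
    have h2 := ((hasDerivAt_pdf ((z - μ * s) / Real.sqrt s)).comp z inner1).const_mul
      (2 * μ * Real.sqrt s)
    have h3 := inner1.mul ((hasDerivAt_pdf ((z - μ * s) / Real.sqrt s)).comp z inner1)
    have total := (h1.sub h2).sub h3
    apply total.congr_deriv
    simp only [Function.comp_apply]
    set r := Real.sqrt s with hr
    clear_value r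
    have hrr : r * r = s := hss
    have hrne : r ≠ 0 := hne
    clear hss hne hsq hr inner1 h1 h2 h3 total hA
    subst hrr
    field_simp
    ring
  have hpos : ∀ z ∈ Ioi x, 0 ≤ z ^ 2 * stdNormalPDF ((z - μ * s) / Real.sqrt s)
      / (s * Real.sqrt s) := by
    intro z _
    have := pdf_pos ((z - μ * s) / Real.sqrt s)
    positivity
  have htend : Tendsto A atTop (𝓝 (μ ^ 2 * s + 1)) := by
    have taff := tendsto_affine_atTop (c := μ * s) hsq
    have t1 := (tendsto_cdf_atTop.comp taff).const_mul (μ ^ 2 * s + 1)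
    have t2 := (tendsto_pdf_atTop.comp taff).const_mul (2 * μ * Real.sqrt s)
    have t3 := tendsto_id_mul_pdf_atTop.comp taff
    have := (t1.sub t2).sub t3
    simpa [Function.comp] using this
  have h := integral_Ioi_of_hasDerivAt_of_nonneg' hderiv hpos htend
  rw [h, hA]
  ring

lemma hasDerivAt_int_Ioi {μ s : ℝ} (hs : 0 < s) (x : ℝ) :
    HasDerivAt (fun y => ∫ z in Ioi y, z * (1 - Fmu μ s z))
      (-(x * (1 - Fmu μ s x))) x := by
  set g := fun z => z * (1 - Fmu μ s z) with hg
  have hcont : Continuous g := continuous_id.mul (continuous_const.sub (continuous_Fmu_z μ s))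
  set C := ∫ z in Ioi (x - 1), g z with hC
  have h : HasDerivAt (fun y => C - ∫ z in (x-1)..y, g z) (-(g x)) x := by
    have h0 : HasDerivAt (fun u => ∫ z in (x-1:ℝ)..u, g z) (g x) x :=
      intervalIntegral.integral_hasDerivAt_right (hcont.intervalIntegrable _ _)
        (hcont.stronglyMeasurableAtFilter _ _) hcont.continuousAt
    simpa using h0.const_sub C
  apply h.congr_of_eventuallyEq
  filter_upwards [Ioi_mem_nhds (show x - 1 < x by linarith)] with y hy
  have hy' : x - 1 ≤ y := le_of_lt hy
  have hsplit : ∫ z in Ioi (x-1), g z = (∫ z in Ioc (x-1) y, g z) + ∫ z in Ioi y, g z := by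
    rw [← setIntegral_union (Ioc_disjoint_Ioi le_rfl) measurableSet_Ioi
      ((integrableOn_g hs (x-1)).mono_set Ioc_subset_Ioi_self) (integrableOn_g hs y),
      Ioc_union_Ioi_eq_Ioi hy']
  rw [intervalIntegral.integral_of_le hy']
  rw [hC]
  linarith [hsplit]

lemma pdf_le_exp (t : ℝ) : stdNormalPDF t ≤ Real.exp (-t^2/2) := by
  rw [stdNormalPDF]
  have h1 : (Real.sqrt (2 * Real.pi))⁻¹ ≤ 1 := by
    rw [inv_le_one_iff₀]
    right
    rw [show (1:ℝ) = Real.sqrt 1 by simp]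
    apply Real.sqrt_le_sqrt
    nlinarith [Real.pi_gt_three]
  nlinarith [Real.exp_pos (-(t^2)/2), Real.exp_pos (-t^2/2)]

lemma self_mul_exp_neg_le_one {y : ℝ} (hy : 0 ≤ y) : y * Real.exp (-y) ≤ 1 := by
  rw [Real.exp_neg, mul_inv_le_iff₀ (Real.exp_pos y)]
  nlinarith [Real.add_one_le_exp y]

set_option maxHeartbeats 1600000 in
lemma hasDerivAt_int_s {μ : ℝ} {s₀ : ℝ} (hs₀ : 0 < s₀) (x : ℝ) :
    HasDerivAt (fun s => ∫ z in Ioi x, z * (1 - Fmu μ s z))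
      (∫ z in Ioi x, z ^ 2 * stdNormalPDF ((z - μ * s₀) / Real.sqrt s₀)
        / (s₀ * Real.sqrt s₀)) s₀ := by
  set c₀ := |μ| * (2 * s₀) with hc₀
  have hc₀0 : 0 ≤ c₀ := by positivity
  set c₁ := ((s₀/2) * Real.sqrt (s₀/2))⁻¹ with hc₁
  have hc₁0 : 0 < c₁ := by
    rw [hc₁]
    have := Real.sqrt_pos.2 (show 0 < s₀/2 by linarith)
    positivity
  set bound := fun z : ℝ => (12*s₀ + 2*c₀^2) * c₁
    * Real.exp (-(max (|z| - c₀) 0)^2 / (6*s₀)) with hbound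
  have hF'cont : ∀ s : ℝ, Continuous (fun z : ℝ =>
      z ^ 2 * stdNormalPDF ((z - μ * s) / Real.sqrt s) / (s * Real.sqrt s)) := by
    intro s
    exact ((continuous_pow 2).mul
      (continuous_pdf.comp ((continuous_id.sub continuous_const).div_const _))).div_const _
  have key := hasDerivAt_integral_of_dominated_loc_of_deriv_le
    (F := fun s z => z * (1 - Fmu μ s z))
    (F' := fun s z => z ^ 2 * stdNormalPDF ((z - μ * s) / Real.sqrt s) / (s * Real.sqrt s))
    (x₀ := s₀) (s := Metric.ball s₀ (s₀/2)) (bound := bound) (μ := volume.restrict (Ioi x))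
    (Metric.ball_mem_nhds _ (by linarith))
    (Filter.Eventually.of_forall fun s =>
      (continuous_id.mul (continuous_const.sub (continuous_Fmu_z μ s))).aestronglyMeasurable)
    (integrableOn_g hs₀ x)
    ((hF'cont s₀).aestronglyMeasurable)
    ?_ ?_ ?_
  · exact key.2
  · -- h_bound
    apply Filter.Eventually.of_forall
    intro z s hsball
    have hs' : |s - s₀| < s₀/2 := by simpa [Real.dist_eq] using hsball
    rw [abs_lt] at hs'
    have hs1 : s₀/2 < s := by linarith
    have hs2 : s < 3/2 * s₀ := by linarith
    have hspos : 0 < s := by linarith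
    have hsq : 0 < Real.sqrt s := Real.sqrt_pos.2 hspos
    have hss : Real.sqrt s * Real.sqrt s = s := Real.mul_self_sqrt hspos.le
    set w := z - μ * s with hw
    set E1 := Real.exp (-w^2 / (6*s₀)) with hE1
    set Emax := Real.exp (-(max (|z| - c₀) 0)^2 / (6*s₀)) with hEmax
    have hE10 : 0 < E1 := Real.exp_pos _
    have hEmax0 : 0 < Emax := Real.exp_pos _
    have hmus : |μ * s| ≤ c₀ := by
      rw [abs_mul, hc₀, abs_of_pos hspos]
      nlinarith [abs_nonneg μ]
    -- pdf bound
    have hu2 : ((z - μ * s) / Real.sqrt s)^2 = w^2 / s := by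
      rw [div_pow, ← hw]
      congr 1
      rw [sq]
      exact hss
    have hP : stdNormalPDF ((z - μ * s) / Real.sqrt s) ≤ E1 * E1 := by
      calc stdNormalPDF ((z - μ * s) / Real.sqrt s)
          ≤ Real.exp (-((z - μ * s) / Real.sqrt s)^2/2) := pdf_le_exp _
        _ = Real.exp (-w^2/(2*s)) := by rw [hu2]; congr 1; field_simp
        _ ≤ E1 * E1 := by
            rw [hE1, ← Real.exp_add]
            apply Real.exp_le_exp.2
            rw [← add_div]
            rw [div_le_div_iff₀ (by linarith) (by linarith)]
            nlinarith [sq_nonneg w]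
    have hmax : (max (|z| - c₀) 0)^2 ≤ w^2 := by
      rcases le_or_gt |z| c₀ with hcase | hcase
      · rw [max_eq_right (by linarith)]
        simpa using sq_nonneg w
      · rw [max_eq_left (by linarith)]
        have h1 : |z| - c₀ ≤ |w| := by
          have := abs_sub_abs_le_abs_sub z (μ * s)
          rw [← hw] at this
          linarith
        calc (|z| - c₀)^2 ≤ |w|^2 := by nlinarith [abs_nonneg w]
          _ = w^2 := sq_abs w
    have hE1max : E1 ≤ Emax := by
      rw [hE1, hEmax]
      apply Real.exp_le_exp.2
      rw [div_le_div_iff₀ (by linarith) (by linarith)]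
      nlinarith [hmax]
    have hz2E : z^2 * E1 ≤ 12*s₀ + 2*c₀^2 := by
      have hy : 0 ≤ w^2/(6*s₀) := by positivity
      have h6 : w^2 * E1 ≤ 6*s₀ := by
        have h0 := self_mul_exp_neg_le_one hy
        have h1 : w^2 * Real.exp (-(w^2/(6*s₀)))
            = (6*s₀) * (w^2/(6*s₀) * Real.exp (-(w^2/(6*s₀)))) := by field_simp
        rw [hE1, show -w^2/(6*s₀) = -(w^2/(6*s₀)) by ring, h1]
        have h2 := mul_le_mul_of_nonneg_left h0 (by positivity : (0:ℝ) ≤ 6*s₀)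
        linarith
      have hz2 : z^2 ≤ 2*w^2 + 2*c₀^2 := by
        have h2 : (μ*s)^2 ≤ c₀^2 := by nlinarith [abs_nonneg (μ*s), sq_abs (μ*s), hmus]
        have hww : w^2 = (z - μ*s)^2 := by rw [hw]
        nlinarith [sq_nonneg (z - 2*(μ*s))]
      have hE1le1 : E1 ≤ 1 := by
        rw [hE1]
        apply Real.exp_le_one_iff.2
        apply div_nonpos_of_nonpos_of_nonneg (by nlinarith [sq_nonneg w]) (by linarith)
      nlinarith
    have hinv : (s * Real.sqrt s)⁻¹ ≤ c₁ := by
      rw [hc₁]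
      apply inv_anti₀
      · have := Real.sqrt_pos.2 (show 0 < s₀/2 by linarith)
        positivity
      · apply mul_le_mul hs1.le (Real.sqrt_le_sqrt (by linarith)) (Real.sqrt_nonneg _) hspos.le
    have hF'nonneg : 0 ≤ z ^ 2 * stdNormalPDF ((z - μ * s) / Real.sqrt s) / (s * Real.sqrt s) := by
      have := (pdf_pos ((z - μ * s) / Real.sqrt s)).le
      positivity
    rw [Real.norm_eq_abs, abs_of_nonneg hF'nonneg]
    calc z ^ 2 * stdNormalPDF ((z - μ * s) / Real.sqrt s) / (s * Real.sqrt s)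
        ≤ z ^ 2 * (E1 * E1) / (s * Real.sqrt s) := by
          gcongr
      _ = (z^2 * E1) * E1 * (s * Real.sqrt s)⁻¹ := by ring
      _ ≤ (12*s₀ + 2*c₀^2) * Emax * c₁ := by
          apply mul_le_mul
          · exact mul_le_mul hz2E hE1max hE10.le (by positivity)
          · exact hinv
          · positivity
          · positivity
      _ = bound z := by rw [hbound]; ring
  · -- bound integrable
    have hgauss : Integrable (fun z : ℝ => Real.exp (-(1/(12*s₀)) * z^2)) :=
      integrable_exp_neg_mul_sq (by positivity)
    have hcont : Continuous bound := by
      rw [hbound]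
      fun_prop
    apply Integrable.integrableOn
    apply Integrable.mono' (g := fun z => (12*s₀ + 2*c₀^2) * c₁ * Real.exp (c₀^2/(6*s₀))
      * Real.exp (-(1/(12*s₀)) * z^2))
    · exact (hgauss.const_mul _)
    · exact hcont.aestronglyMeasurable
    · apply Filter.Eventually.of_forall
      intro z
      rw [Real.norm_eq_abs, hbound]
      have hb0 : (0:ℝ) ≤ (12*s₀ + 2*c₀^2) * c₁ := by positivity
      rw [abs_of_nonneg (by positivity)]
      rw [mul_assoc, ← Real.exp_add]
      apply mul_le_mul_of_nonneg_left _ hb0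
      apply Real.exp_le_exp.2
      have hkey : z^2/2 ≤ (max (|z| - c₀) 0)^2 + c₀^2 := by
        rcases le_or_gt |z| c₀ with hcase | hcase
        · rw [max_eq_right (by linarith)]
          nlinarith [sq_abs z, abs_nonneg z]
        · rw [max_eq_left (by linarith)]
          nlinarith [sq_abs z, abs_nonneg z, sq_nonneg (|z| - 2*c₀)]
      have h6 : (6*s₀)⁻¹ = 2 * (12*s₀)⁻¹ := by field_simp; ring
      have hi : (0:ℝ) ≤ (12*s₀)⁻¹ := by positivity
      rw [div_eq_mul_inv, div_eq_mul_inv, h6, one_div]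
      nlinarith [mul_nonneg hi (by linarith [hkey] :
        (0:ℝ) ≤ 2*(max (|z| - c₀) 0)^2 + 2*c₀^2 - z^2)]
  · -- h_diff
    apply Filter.Eventually.of_forall
    intro z s hsball
    have hs' : |s - s₀| < s₀/2 := by simpa [Real.dist_eq] using hsball
    rw [abs_lt] at hs'
    have hspos : 0 < s := by linarith
    have h := ((hasDerivAt_Fmu_s hspos μ z).const_sub 1).const_mul z
    apply h.congr_deriv
    ring


/-- `H = G_t - μ G_x + (1/2) G_{xx}` is given by the closed-form
expression (4.2). -/
theorem Hfun_closed_form (μ T : ℝ) (hT : 0 < T) (t x : ℝ) (ht : t ∈ Ico 0 T) (hx : 0 ≤ x) :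
    deriv (fun t' => Gfun μ T t' x) t - μ * deriv (fun y => Gfun μ T t y) x
        + (1/2) * deriv (deriv (fun y => Gfun μ T t y)) x
      = (2 * μ ^ 2 * (T - t) - 2 * μ * x + 3) *
            stdNormalCDF ((x - μ * (T - t)) / Real.sqrt (T - t))
        - 2 * μ * Real.sqrt (T - t) * stdNormalPDF ((x - μ * (T - t)) / Real.sqrt (T - t))
        - Real.exp (2 * μ * x) * stdNormalCDF ((-x - μ * (T - t)) / Real.sqrt (T - t))
        - 2 * (1 + μ ^ 2 * (T - t)) := by
  obtain ⟨ht0, htT⟩ := ht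
  have hs : 0 < T - t := by linarith
  set s := T - t with hsdef
  have hsq : 0 < Real.sqrt s := Real.sqrt_pos.2 hs
  have hss : Real.sqrt s * Real.sqrt s = s := Real.mul_self_sqrt hs.le
  set K := (μ ^ 2 * s + 1) * (1 - stdNormalCDF ((x - μ * s) / Real.sqrt s))
    + (2 * μ * Real.sqrt s + (x - μ * s) / Real.sqrt s)
      * stdNormalPDF ((x - μ * s) / Real.sqrt s) with hK
  -- t-derivative
  have hIder : HasDerivAt (fun s' => ∫ z in Ioi x, z * (1 - Fmu μ s' z)) K s := by
    have h := hasDerivAt_int_s (μ := μ) hs x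
    rwa [integral_sq_pdf_Ioi hs x] at h
  have hsub : HasDerivAt (fun t' : ℝ => T - t') (-1) t := by
    simpa using (hasDerivAt_id t).const_sub T
  have hGt : HasDerivAt (fun t' => Gfun μ T t' x) (2 * (K * -1)) t := by
    have hcomp := (HasDerivAt.comp t hIder hsub).const_mul 2
    have := hcomp.const_add (x ^ 2)
    apply this.congr_of_eventuallyEq
    apply Filter.Eventually.of_forall
    intro t'
    simp [Gfun, Function.comp]
  -- x-derivative
  have hGy : ∀ y : ℝ, HasDerivAt (fun y => Gfun μ T t y)
      (2 * y - 2 * (y * (1 - Fmu μ s y))) y := by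
    intro y
    have h1 : HasDerivAt (fun y : ℝ => y ^ 2) (2 * y) y := by
      simpa using hasDerivAt_pow 2 y
    have h2 := (hasDerivAt_int_Ioi (μ := μ) hs y).const_mul 2
    have h3 := h1.add h2
    have heq : (fun y => Gfun μ T t y)
        = fun y => y ^ 2 + 2 * ∫ z in Ioi y, z * (1 - Fmu μ s z) := by
      funext y
      rw [Gfun, ← hsdef]
    rw [heq]
    apply h3.congr_deriv
    ring
  have hderiv_eq : deriv (fun y => Gfun μ T t y)
      = fun y => 2 * y - 2 * (y * (1 - Fmu μ s y)) :=
    funext fun y => (hGy y).deriv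
  have hG2 : HasDerivAt (fun y => 2 * y - 2 * (y * (1 - Fmu μ s y)))
      (2 - 2 * ((1 - Fmu μ s x)
        - x * (2 * stdNormalPDF ((x - μ * s) / Real.sqrt s) / Real.sqrt s
          - 2 * μ * Real.exp (2 * μ * x) * stdNormalCDF ((-x - μ * s) / Real.sqrt s)))) x := by
    have h1 : HasDerivAt (fun y : ℝ => 2 * y) 2 x := by
      simpa using (hasDerivAt_id x).const_mul 2
    have h2 := (hasDerivAt_g_z hs μ x).const_mul 2
    apply (h1.sub h2).congr_deriv
    ring
  rw [hGt.deriv, hderiv_eq, hG2.deriv]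
  beta_reduce
  rw [hK]
  simp only [one_sub_Fmu, cdf_neg]
  generalize stdNormalCDF ((x - μ * s) / Real.sqrt s) = P
  generalize stdNormalCDF ((-x - μ * s) / Real.sqrt s) = Q
  generalize stdNormalPDF ((x - μ * s) / Real.sqrt s) = D
  generalize Real.exp (2 * μ * x) = E
  clear_value s
  clear hsdef hIder hGt hGy hderiv_eq hG2 hsub hT htT
  set r := Real.sqrt s with hr
  clear_value r
  have hrne : r ≠ 0 := ne_of_gt hsq
  clear hr hs hsq
  subst hss
  field_simp
  ring
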